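/- Let β_L, β_R > 0. Then the function p ↦ p₁·(1/(e^{β_R‖p‖} − 1) − 1/(e^{β_L‖p‖} − 1)) is integrable on the half-space {p ∈ ℝ³ : p₁ > 0} and (2π)^{−3}·∫_{p₁ > 0} p₁·(1/(e^{β_R‖p‖} − 1) − 1/(e^{β_L‖p‖} − 1)) dp = (π²/120)·(1/β_R⁴ − 1/β_L⁴). -/

import Mathlib

open MeasureTheory Real Set ENNReal

/-- lintegral version of polar coordinates in the plane. -/
lemma lintegral_polar (g : ℝ × ℝ → ℝ≥0∞) :
    ∫⁻ p, g p = ∫⁻ p in polarCoord.target, ENNReal.ofReal p.1 * g (polarCoord.symm p) := by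
  set B : ℝ × ℝ → ℝ × ℝ →L[ℝ] ℝ × ℝ := fun p =>
    LinearMap.toContinuousLinearMap (Matrix.toLin (Module.Basis.finTwoProd ℝ) (Module.Basis.finTwoProd ℝ)
      !![cos p.2, -p.1 * sin p.2; sin p.2, p.1 * cos p.2])
  have A : ∀ p ∈ polarCoord.target, HasFDerivWithinAt polarCoord.symm (B p) polarCoord.target p :=
    fun p _ => (hasFDerivAt_polarCoord_symm p).hasFDerivWithinAt
  have B_det : ∀ p, (B p).det = p.1 := by
    intro p
    conv_rhs => rw [← one_mul p.1, ← cos_sq_add_sin_sq p.2]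
    simp only [B, neg_mul, LinearMap.det_toContinuousLinearMap, LinearMap.det_toLin,
      Matrix.det_fin_two_of, sub_neg_eq_add]
    ring
  calc
    ∫⁻ p, g p = ∫⁻ p in polarCoord.source, g p := by
      rw [← setLIntegral_univ]
      exact setLIntegral_congr polarCoord_source_ae_eq_univ.symm
    _ = ∫⁻ p in polarCoord.symm '' polarCoord.target, g p := by
      rw [polarCoord.symm_image_target_eq_source]
    _ = ∫⁻ p in polarCoord.target, ENNReal.ofReal |(B p).det| * g (polarCoord.symm p) := by
      apply lintegral_image_eq_lintegral_abs_det_fderiv_mul volume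
        polarCoord.open_target.measurableSet A
      exact polarCoord.symm.injOn
    _ = _ := by
      refine setLIntegral_congr_fun polarCoord.open_target.measurableSet
        (fun x hx => ?_)
      rw [B_det, abs_of_pos hx.1]

/-- Substitution `u = √(a² + r²)` in a Lebesgue integral. -/
lemma lintegral_subst (a : ℝ) (ha : 0 < a) (G : ℝ → ℝ≥0∞) :
    ∫⁻ u in Set.Ioi a, G u
      = ∫⁻ r in Set.Ioi (0:ℝ),
          ENNReal.ofReal (r / Real.sqrt (a ^ 2 + r ^ 2)) * G (Real.sqrt (a ^ 2 + r ^ 2)) := by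
  set f : ℝ → ℝ := fun r => Real.sqrt (a ^ 2 + r ^ 2) with hf
  set f' : ℝ → ℝ := fun r => r / Real.sqrt (a ^ 2 + r ^ 2) with hf'
  have hpos : ∀ r : ℝ, 0 < a ^ 2 + r ^ 2 := fun r => by positivity
  have hder : ∀ r ∈ Set.Ioi (0:ℝ), HasDerivWithinAt f (f' r) (Set.Ioi 0) r := by
    intro r _
    have h1 : HasDerivAt (fun r : ℝ => a ^ 2 + r ^ 2) (2 * r) r := by
      simpa using (hasDerivAt_pow 2 r).const_add (a ^ 2)
    have h2 := (Real.hasDerivAt_sqrt (hpos r).ne').comp r h1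
    have : 1 / (2 * Real.sqrt (a ^ 2 + r ^ 2)) * (2 * r) = f' r := by
      have : Real.sqrt (a ^ 2 + r ^ 2) ≠ 0 := (Real.sqrt_pos.2 (hpos r)).ne'
      rw [hf']
      field_simp
    rw [this] at h2
    exact h2.hasDerivWithinAt
  have hmono : StrictMonoOn f (Set.Ioi 0) := by
    intro x hx y hy hxy
    apply Real.sqrt_lt_sqrt (hpos x).le
    have : (0:ℝ) < x := hx
    nlinarith
  have himg : f '' Set.Ioi 0 = Set.Ioi a := by
    apply Set.Subset.antisymm
    · rintro _ ⟨r, hr, rfl⟩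
      have : (0:ℝ) < r := hr
      have : a = Real.sqrt (a ^ 2) := (Real.sqrt_sq ha.le).symm
      rw [Set.mem_Ioi, this]
      exact Real.sqrt_lt_sqrt (sq_nonneg a) (by nlinarith)
    · intro u hu
      have hu' : a < u := hu
      have hua : 0 < u := ha.trans hu'
      refine ⟨Real.sqrt (u ^ 2 - a ^ 2), ?_, ?_⟩
      · exact Real.sqrt_pos.2 (by nlinarith)
      · show Real.sqrt (a ^ 2 + Real.sqrt (u ^ 2 - a ^ 2) ^ 2) = u
        rw [Real.sq_sqrt (by nlinarith : (0:ℝ) ≤ u ^ 2 - a ^ 2)]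
        rw [show a ^ 2 + (u ^ 2 - a ^ 2) = u ^ 2 by ring]
        exact Real.sqrt_sq hua.le
  calc
    ∫⁻ u in Set.Ioi a, G u = ∫⁻ u in f '' Set.Ioi 0, G u := by rw [himg]
    _ = ∫⁻ r in Set.Ioi (0:ℝ),
          ENNReal.ofReal |ContinuousLinearMap.det
            (ContinuousLinearMap.smulRight (1 : ℝ →L[ℝ] ℝ) (f' r))| * G (f r) :=
      lintegral_image_eq_lintegral_abs_det_fderiv_mul volume measurableSet_Ioi
        (fun r hr => (hder r hr).hasFDerivWithinAt) hmono.injOn G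
    _ = _ := by
      refine setLIntegral_congr_fun measurableSet_Ioi
        (fun r hr => ?_)
      rw [ContinuousLinearMap.smulRight_one_eq_toSpanSingleton,
        ContinuousLinearMap.det_toSpanSingleton, abs_of_nonneg]
      exact div_nonneg (le_of_lt hr) (Real.sqrt_nonneg _)

lemma term_integral (c : ℝ) (hc : 0 < c) :
    ∫⁻ u in Set.Ioi (0:ℝ), ENNReal.ofReal (u ^ 3 * Real.exp (-c * u))
      = ENNReal.ofReal (6 / c ^ 4) := by
  have hcong : ∀ x ∈ Set.Ioi (0:ℝ),
      x ^ (3:ℝ) * Real.exp (-c * x ^ (1:ℝ)) = x ^ 3 * Real.exp (-c * x) := by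
    intro x hx
    rw [Real.rpow_one, show (3:ℝ) = ((3:ℕ):ℝ) by norm_num,
      Real.rpow_natCast]
  have hint : IntegrableOn (fun u : ℝ => u ^ 3 * Real.exp (-c * u)) (Set.Ioi 0) := by
    have := integrableOn_rpow_mul_exp_neg_mul_rpow (p := 1) (s := 3) (b := c)
      (by norm_num) (by norm_num) hc
    exact (this.congr_fun hcong measurableSet_Ioi)
  have hval : ∫ u in Set.Ioi (0:ℝ), u ^ 3 * Real.exp (-c * u) = 6 / c ^ 4 := by
    rw [← setIntegral_congr_fun measurableSet_Ioi hcong]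
    rw [integral_rpow_mul_exp_neg_mul_rpow (by norm_num) (by norm_num) hc]
    rw [show ((3:ℝ) + 1) / 1 = ((4:ℕ):ℝ) by norm_num]
    rw [show -((3:ℝ) + 1) / 1 = -((4:ℕ):ℝ) by norm_num]
    rw [Real.rpow_neg hc.le, Real.rpow_natCast,
      show ((4:ℕ):ℝ) = ((3:ℕ):ℝ) + 1 by norm_num, Real.Gamma_nat_eq_factorial (n := 3)]
    norm_num [Nat.factorial]
    ring
  rw [← hval, ← ofReal_integral_eq_lintegral_ofReal hint]
  filter_upwards [ae_restrict_mem measurableSet_Ioi] with x hx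
  have : (0:ℝ) < x := hx
  positivity

lemma bose_series (β u : ℝ) (hβ : 0 < β) (hu : 0 < u) :
    (Real.exp (β * u) - 1)⁻¹ = ∑' n : ℕ, Real.exp (-(((n:ℝ) + 1) * β) * u) := by
  have hx1 : Real.exp (-(β * u)) < 1 := by
    rw [Real.exp_lt_one_iff]
    have := mul_pos hβ hu
    linarith
  have hx0 : 0 < Real.exp (-(β * u)) := Real.exp_pos _
  have hterm : ∀ n : ℕ, Real.exp (-(((n:ℝ) + 1) * β) * u) = Real.exp (-(β * u)) ^ (n + 1) := by
    intro n
    rw [← Real.exp_nat_mul]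
    congr 1
    push_cast
    ring
  have hE1 : 1 < Real.exp (β * u) := by
    rw [← Real.exp_zero]
    exact Real.exp_lt_exp.2 (by positivity)
  have hgeom : ∑' n : ℕ, Real.exp (-(β * u)) ^ n = (1 - Real.exp (-(β * u)))⁻¹ :=
    tsum_geometric_of_lt_one hx0.le hx1
  calc (Real.exp (β * u) - 1)⁻¹
      = (1 - Real.exp (-(β * u)))⁻¹ * Real.exp (-(β * u)) := by
        rw [Real.exp_neg]
        have h0 : Real.exp (β * u) ≠ 0 := (Real.exp_pos _).ne'
        have h1 : Real.exp (β * u) - 1 ≠ 0 := by linarith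
        field_simp
    _ = (∑' n : ℕ, Real.exp (-(β * u)) ^ n) * Real.exp (-(β * u)) := by rw [hgeom]
    _ = ∑' n : ℕ, Real.exp (-(β * u)) ^ n * Real.exp (-(β * u)) := (tsum_mul_right).symm
    _ = ∑' n : ℕ, Real.exp (-(((n:ℝ) + 1) * β) * u) := by
        refine tsum_congr fun n => ?_
        rw [hterm n, pow_succ]

lemma lintegral_bose (β : ℝ) (hβ : 0 < β) :
    ∫⁻ u in Set.Ioi (0:ℝ), ENNReal.ofReal (u ^ 3 * (Real.exp (β * u) - 1)⁻¹)
      = ENNReal.ofReal (π ^ 4 / (15 * β ^ 4)) := by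
  have key : ∀ u ∈ Set.Ioi (0:ℝ),
      ENNReal.ofReal (u ^ 3 * (Real.exp (β * u) - 1)⁻¹)
        = ∑' n : ℕ, ENNReal.ofReal (u ^ 3 * Real.exp (-(((n:ℝ) + 1) * β) * u)) := by
    intro u hu
    have hu' : (0:ℝ) < u := hu
    have hx1 : Real.exp (-(β * u)) < 1 := by
      rw [Real.exp_lt_one_iff]
      have := mul_pos hβ hu'
      linarith
    have hx0 : (0:ℝ) < Real.exp (-(β * u)) := Real.exp_pos _
    have hsum : Summable (fun n : ℕ => Real.exp (-(((n:ℝ) + 1) * β) * u)) := by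
      refine Summable.congr (Summable.mul_right (Real.exp (-(β * u)))
        (summable_geometric_of_lt_one hx0.le hx1)) fun n => ?_
      rw [← pow_succ, ← Real.exp_nat_mul]
      congr 1
      push_cast
      ring
    rw [bose_series β u hβ hu', ← tsum_mul_left]
    exact ENNReal.ofReal_tsum_of_nonneg (fun n => by positivity) (hsum.mul_left _)
  rw [setLIntegral_congr_fun measurableSet_Ioi key]
  rw [lintegral_tsum (f := fun (n : ℕ) (u : ℝ) =>
      ENNReal.ofReal (u ^ 3 * Real.exp (-(((n:ℝ) + 1) * β) * u)))
    (fun n => (((measurable_id.pow_const 3).mul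
      ((measurable_id.const_mul (-(((n:ℝ) + 1) * β))).exp)).ennreal_ofReal).aemeasurable)]
  have hterm : ∀ n : ℕ,
      ∫⁻ u in Set.Ioi (0:ℝ), ENNReal.ofReal (u ^ 3 * Real.exp (-(((n:ℝ) + 1) * β) * u))
        = ENNReal.ofReal ((6 / β ^ 4) * (1 / ((n:ℝ) + 1) ^ 4)) := by
    intro n
    have hc : (0:ℝ) < ((n:ℝ) + 1) * β := by positivity
    rw [term_integral _ hc]
    congr 1
    field_simp
  rw [tsum_congr hterm]
  have h1 : HasSum (fun n : ℕ => 1 / ((n:ℝ) + 1) ^ 4) (π ^ 4 / 90) := by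
    have h2 := (hasSum_nat_add_iff (f := fun n : ℕ => 1 / ((n:ℝ)) ^ 4) 1
      (g := π ^ 4 / 90)).mpr (by simpa using hasSum_zeta_four)
    refine h2.congr_fun fun n => ?_
    push_cast
    ring_nf
  have hs : HasSum (fun n : ℕ => (6 / β ^ 4) * (1 / ((n:ℝ) + 1) ^ 4))
      ((6 / β ^ 4) * (π ^ 4 / 90)) := h1.mul_left _
  rw [← ENNReal.ofReal_tsum_of_nonneg (fun n => by positivity) hs.summable, hs.tsum_eq]
  congr 1
  field_simp
  ring

lemma inner_eq (g : ℝ → ℝ) (hg : Measurable g) (a : ℝ) (ha : 0 < a) :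
    ∫⁻ y : Fin 2 → ℝ, ENNReal.ofReal (a * g (Real.sqrt (a ^ 2 + ∑ j, y j ^ 2)))
      = ENNReal.ofReal (2 * π) * ∫⁻ u in Set.Ioi a, ENNReal.ofReal (a * u * g u) := by
  set F : ℝ × ℝ → ℝ≥0∞ := fun w => ENNReal.ofReal (a * g (Real.sqrt (a ^ 2 + (w.1 ^ 2 + w.2 ^ 2))))
    with hF
  have step1 : ∫⁻ y : Fin 2 → ℝ, ENNReal.ofReal (a * g (Real.sqrt (a ^ 2 + ∑ j, y j ^ 2)))
      = ∫⁻ w : ℝ × ℝ, F w := by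
    rw [← (volume_preserving_finTwoArrow ℝ).lintegral_comp_emb
      (MeasurableEquiv.finTwoArrow.measurableEmbedding) F]
    refine lintegral_congr fun y => ?_
    rw [hF]
    rw [Fin.sum_univ_two]
    rfl
  rw [step1, lintegral_polar F]
  have step2 : ∀ q ∈ polarCoord.target,
      ENNReal.ofReal q.1 * F (polarCoord.symm q)
        = ENNReal.ofReal q.1 * ENNReal.ofReal (a * g (Real.sqrt (a ^ 2 + q.1 ^ 2))) := by
    intro q _
    have hps : polarCoord.symm q = (q.1 * Real.cos q.2, q.1 * Real.sin q.2) := rfl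
    have hcs : (q.1 * Real.cos q.2) ^ 2 + (q.1 * Real.sin q.2) ^ 2 = q.1 ^ 2 := by
      have h := Real.sin_sq_add_cos_sq q.2
      nlinarith [h]
    rw [hps, hF]
    simp only
    rw [hcs]
  rw [setLIntegral_congr_fun polarCoord.open_target.measurableSet
    step2]
  have htarget : polarCoord.target = Set.Ioi (0:ℝ) ×ˢ Set.Ioo (-π) π := rfl
  have hmeas : Measurable fun q : ℝ × ℝ =>
      ENNReal.ofReal q.1 * ENNReal.ofReal (a * g (Real.sqrt (a ^ 2 + q.1 ^ 2))) := by
    refine (measurable_fst.ennreal_ofReal).mul ?_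
    exact ((measurable_const.mul (hg.comp ((Real.continuous_sqrt.measurable).comp
      ((measurable_fst.pow_const 2).const_add (a ^ 2)))))).ennreal_ofReal
  rw [htarget, MeasureTheory.Measure.volume_eq_prod, ← Measure.prod_restrict,
    lintegral_prod _ hmeas.aemeasurable]
  simp only [lintegral_const, Measure.restrict_apply MeasurableSet.univ, Set.univ_inter]
  have hvol : (volume (Set.Ioo (-π) π)) = ENNReal.ofReal (2 * π) := by
    rw [Real.volume_Ioo]
    congr 1
    ring
  have step3 : ∀ r ∈ Set.Ioi (0:ℝ),
      ENNReal.ofReal r * ENNReal.ofReal (a * g (Real.sqrt (a ^ 2 + r ^ 2)))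
          * volume (Set.Ioo (-π) π)
        = ENNReal.ofReal (2 * π) * (ENNReal.ofReal (r / Real.sqrt (a ^ 2 + r ^ 2))
            * ENNReal.ofReal (a * Real.sqrt (a ^ 2 + r ^ 2) * g (Real.sqrt (a ^ 2 + r ^ 2)))) := by
    intro r hr
    have hr' : (0:ℝ) < r := hr
    have hs : (0:ℝ) < Real.sqrt (a ^ 2 + r ^ 2) := Real.sqrt_pos.2 (by positivity)
    rw [hvol, mul_comm _ (ENNReal.ofReal (2 * π))]
    congr 1
    rw [← ENNReal.ofReal_mul hr'.le, ← ENNReal.ofReal_mul (by positivity)]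
    congr 1
    field_simp
  rw [setLIntegral_congr_fun measurableSet_Ioi step3,
    lintegral_const_mul' _ _ ENNReal.ofReal_ne_top,
    ← lintegral_subst a ha (fun u => ENNReal.ofReal (a * u * g u))]

lemma swap_eq (g : ℝ → ℝ) (hg : Measurable g) :
    ∫⁻ a in Set.Ioi (0:ℝ), ∫⁻ u in Set.Ioi a, ENNReal.ofReal (a * u * g u)
      = ∫⁻ u in Set.Ioi (0:ℝ), ENNReal.ofReal (u ^ 2 / 2) * ENNReal.ofReal (u * g u) := by
  set Φ : ℝ × ℝ → ℝ≥0∞ := fun q =>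
    ({q : ℝ × ℝ | q.1 < q.2}).indicator (fun q => ENNReal.ofReal (q.1 * q.2 * g q.2)) q with hΦ
  have hΦm : Measurable Φ :=
    Measurable.indicator (((measurable_fst.mul measurable_snd).mul
      (hg.comp measurable_snd)).ennreal_ofReal) (measurableSet_lt measurable_fst measurable_snd)
  have eq1 : ∀ a ∈ Set.Ioi (0:ℝ),
      ∫⁻ u in Set.Ioi a, ENNReal.ofReal (a * u * g u) = ∫⁻ u in Set.Ioi (0:ℝ), Φ (a, u) := by
    intro a ha
    have h1 : (fun u => Φ (a, u)) = (Set.Ioi a).indicator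
        (fun u => ENNReal.ofReal (a * u * g u)) := by
      ext u
      simp [hΦ, Set.indicator_apply]
    rw [h1, lintegral_indicator measurableSet_Ioi, Measure.restrict_restrict measurableSet_Ioi,
      Set.inter_eq_self_of_subset_left (Set.Ioi_subset_Ioi (le_of_lt ha))]
  rw [setLIntegral_congr_fun measurableSet_Ioi eq1]
  have eq2 : ∫⁻ a in Set.Ioi (0:ℝ), ∫⁻ u in Set.Ioi (0:ℝ), Φ (a, u)
      = ∫⁻ u in Set.Ioi (0:ℝ), ∫⁻ a in Set.Ioi (0:ℝ), Φ (a, u) := by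
    rw [← lintegral_prod _ (hΦm.aemeasurable), ← lintegral_prod_symm _ (hΦm.aemeasurable)]
  rw [eq2]
  refine setLIntegral_congr_fun measurableSet_Ioi (fun u hu => ?_)
  have hu' : (0:ℝ) < u := hu
  have h2 : (fun a => Φ (a, u)) = (Set.Iio u).indicator
      (fun a => ENNReal.ofReal (a * u * g u)) := by
    ext a
    simp [hΦ, Set.indicator_apply]
  rw [h2, lintegral_indicator measurableSet_Iio, Measure.restrict_restrict measurableSet_Iio,
    Set.Iio_inter_Ioi]
  have h3 : ∀ a ∈ Set.Ioo (0:ℝ) u,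
      ENNReal.ofReal (a * u * g u) = ENNReal.ofReal a * ENNReal.ofReal (u * g u) := by
    intro a ha
    rw [← ENNReal.ofReal_mul ha.1.le, mul_assoc]
  rw [setLIntegral_congr_fun measurableSet_Ioo h3,
    lintegral_mul_const' _ _ ENNReal.ofReal_ne_top]
  congr 1
  have hint : IntegrableOn (fun a : ℝ => a) (Set.Ioo 0 u) :=
    (intervalIntegral.intervalIntegrable_id (μ := volume) (a := 0) (b := u)).1.mono_set
      Set.Ioo_subset_Ioc_self
  rw [← ofReal_integral_eq_lintegral_ofReal hint ?_]
  · congr 1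
    rw [← MeasureTheory.integral_Ioc_eq_integral_Ioo,
      ← intervalIntegral.integral_of_le hu'.le, integral_id]
    norm_num
  · filter_upwards [ae_restrict_mem measurableSet_Ioo] with x hx
    exact hx.1.le

lemma key_lintegral (β : ℝ) (hβ : 0 < β) :
    ∫⁻ p in {p : EuclideanSpace ℝ (Fin 3) | 0 < p 0},
        ENNReal.ofReal (p 0 * (Real.exp (β * ‖p‖) - 1)⁻¹)
      = ENNReal.ofReal (π ^ 5 / (15 * β ^ 4)) := by
  set g : ℝ → ℝ := fun t => (Real.exp (β * t) - 1)⁻¹ with hgdef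
  have hg : Measurable g := (((measurable_id.const_mul β).exp).sub measurable_const).inv
  have stepA :
      ∫⁻ p in {p : EuclideanSpace ℝ (Fin 3) | 0 < p 0}, ENNReal.ofReal (p 0 * g ‖p‖)
        = ∫⁻ x in {x : Fin 3 → ℝ | 0 < x 0},
            ENNReal.ofReal (x 0 * g (Real.sqrt (∑ i, x i ^ 2))) := by
    have hA := ((EuclideanSpace.volume_preserving_symm_measurableEquiv_toLp
        (Fin 3)).symm _).setLIntegral_comp_preimage_emb
      (MeasurableEquiv.measurableEmbedding _)
      (fun p : EuclideanSpace ℝ (Fin 3) => ENNReal.ofReal (p 0 * g ‖p‖))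
      {p : EuclideanSpace ℝ (Fin 3) | 0 < p 0}
    rw [← hA]
    have h1 : ∀ x : Fin 3 → ℝ,
        ‖(MeasurableEquiv.toLp 2 (Fin 3 → ℝ)).symm.symm x‖ = Real.sqrt (∑ i, x i ^ 2) := by
      intro x
      rw [EuclideanSpace.norm_eq]
      congr 1
      refine Finset.sum_congr rfl fun i _ => ?_
      rw [Real.norm_eq_abs, sq_abs]
      rfl
    have h2 : ((MeasurableEquiv.toLp 2 (Fin 3 → ℝ)).symm.symm ⁻¹'
        {p : EuclideanSpace ℝ (Fin 3) | 0 < p 0}) = {x : Fin 3 → ℝ | 0 < x 0} := rfl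
    rw [h2]
    refine setLIntegral_congr_fun (measurableSet_lt measurable_const (measurable_pi_apply 0))
      (fun x _ => ?_)
    rw [h1]
    rfl
  have stepB :
      ∫⁻ x in {x : Fin 3 → ℝ | 0 < x 0},
            ENNReal.ofReal (x 0 * g (Real.sqrt (∑ i, x i ^ 2)))
        = ∫⁻ z in (Set.Ioi (0:ℝ)) ×ˢ (Set.univ : Set (Fin 2 → ℝ)),
            ENNReal.ofReal (z.1 * g (Real.sqrt (z.1 ^ 2 + ∑ j, z.2 j ^ 2))) := by
    have hB := ((MeasureTheory.volume_preserving_piFinSuccAbove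
        (fun _ : Fin 3 => ℝ) 0).symm _).setLIntegral_comp_preimage_emb
      (MeasurableEquiv.measurableEmbedding _)
      (fun x : Fin 3 → ℝ => ENNReal.ofReal (x 0 * g (Real.sqrt (∑ i, x i ^ 2))))
      {x : Fin 3 → ℝ | 0 < x 0}
    rw [← hB]
    have hsymm : ∀ z : ℝ × (Fin 2 → ℝ),
        (MeasurableEquiv.piFinSuccAbove (fun _ : Fin 3 => ℝ) 0).symm z
          = Fin.insertNth 0 z.1 z.2 := fun z => rfl
    have h2 : ((MeasurableEquiv.piFinSuccAbove (fun _ : Fin 3 => ℝ) 0).symm ⁻¹'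
        {x : Fin 3 → ℝ | 0 < x 0}) = (Set.Ioi (0:ℝ)) ×ˢ (Set.univ : Set (Fin 2 → ℝ)) := by
      ext z
      simp [hsymm, Fin.insertNth_apply_same]
    rw [h2]
    refine setLIntegral_congr_fun
      ((measurableSet_Ioi).prod MeasurableSet.univ)
      (fun z _ => ?_)
    rw [hsymm]
    have e0 : Fin.insertNth (α := fun _ : Fin 3 => ℝ) 0 z.1 z.2 0 = z.1 := rfl
    have e1 : Fin.insertNth (α := fun _ : Fin 3 => ℝ) 0 z.1 z.2 1 = z.2 0 := rfl
    have e2 : Fin.insertNth (α := fun _ : Fin 3 => ℝ) 0 z.1 z.2 2 = z.2 1 := rfl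
    rw [Fin.sum_univ_three, e0, e1, e2, Fin.sum_univ_two, add_assoc]
  have hfz : Measurable fun z : ℝ × (Fin 2 → ℝ) =>
      ENNReal.ofReal (z.1 * g (Real.sqrt (z.1 ^ 2 + ∑ j, z.2 j ^ 2))) := by
    refine Measurable.ennreal_ofReal (measurable_fst.mul
      (hg.comp (Real.continuous_sqrt.measurable.comp ((measurable_fst.pow_const 2).add ?_))))
    exact Finset.measurable_sum Finset.univ
      (fun j _ => ((measurable_pi_apply j).comp measurable_snd).pow_const 2)
  rw [stepA, stepB, MeasureTheory.Measure.volume_eq_prod, ← Measure.prod_restrict,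
    Measure.restrict_univ, lintegral_prod _ hfz.aemeasurable]
  simp only
  rw [setLIntegral_congr_fun measurableSet_Ioi
    (fun a ha => inner_eq g hg a ha)]
  rw [lintegral_const_mul' _ _ ENNReal.ofReal_ne_top, swap_eq g hg]
  have hcomb : ∀ u ∈ Set.Ioi (0:ℝ),
      ENNReal.ofReal (u ^ 2 / 2) * ENNReal.ofReal (u * g u)
        = ENNReal.ofReal ((1:ℝ)/2) * ENNReal.ofReal (u ^ 3 * g u) := by
    intro u hu
    rw [← ENNReal.ofReal_mul (by positivity), ← ENNReal.ofReal_mul (by norm_num)]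
    congr 1
    ring
  rw [setLIntegral_congr_fun measurableSet_Ioi hcomb,
    lintegral_const_mul' _ _ ENNReal.ofReal_ne_top, lintegral_bose β hβ]
  rw [← ENNReal.ofReal_mul (by positivity), ← ENNReal.ofReal_mul (by positivity)]
  congr 1
  field_simp

/-- The expected energy current density of the NESS: for `β_L, β_R > 0`,
the function `p ↦ p₁·(1/(e^{β_R‖p‖} − 1) − 1/(e^{β_L‖p‖} − 1))` is integrable on the
half-space `{p₁ > 0}` and
`(2π)^{-3} ∫_{p₁>0} p₁·(1/(e^{β_R‖p‖} − 1) − 1/(e^{β_L‖p‖} − 1)) dp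
  = (π²/120)(1/β_R⁴ − 1/β_L⁴)`. -/
theorem stmt18 (βL βR : ℝ) (hL : 0 < βL) (hR : 0 < βR) :
    IntegrableOn (fun p : EuclideanSpace ℝ (Fin 3) =>
      p 0 * (1 / (Real.exp (βR * ‖p‖) - 1) - 1 / (Real.exp (βL * ‖p‖) - 1)))
      {p : EuclideanSpace ℝ (Fin 3) | 0 < p 0} ∧
    ((2 * π) ^ 3)⁻¹ * ∫ p in {p : EuclideanSpace ℝ (Fin 3) | 0 < p 0},
        p 0 * (1 / (Real.exp (βR * ‖p‖) - 1) - 1 / (Real.exp (βL * ‖p‖) - 1))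
      = (π ^ 2 / 120) * (1 / βR ^ 4 - 1 / βL ^ 4) := by
  set S : Set (EuclideanSpace ℝ (Fin 3)) := {p | 0 < p 0} with hSdef
  have hcoord : Measurable fun p : EuclideanSpace ℝ (Fin 3) => p 0 :=
    (measurable_pi_apply 0).comp (MeasurableEquiv.toLp 2 (Fin 3 → ℝ)).symm.measurable
  have hS : MeasurableSet S := measurableSet_lt measurable_const hcoord
  set f : ℝ → EuclideanSpace ℝ (Fin 3) → ℝ :=
    fun β p => p 0 * (Real.exp (β * ‖p‖) - 1)⁻¹ with hfdef
  have hmf : ∀ β : ℝ, Measurable (f β) := by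
    intro β
    exact hcoord.mul
      (((measurable_norm.const_mul β).exp.sub measurable_const).inv)
  have hnn : ∀ β : ℝ, 0 < β → ∀ p ∈ S, 0 ≤ f β p := by
    intro β hβ p hp
    have hp0 : (0:ℝ) < p 0 := hp
    have hnorm : (0:ℝ) ≤ ‖p‖ := norm_nonneg _
    have h1 : (1:ℝ) ≤ Real.exp (β * ‖p‖) := Real.one_le_exp (by positivity)
    have : (0:ℝ) ≤ (Real.exp (β * ‖p‖) - 1)⁻¹ := inv_nonneg.2 (by linarith)
    positivity
  have hIβ : ∀ β : ℝ, 0 < β → IntegrableOn (f β) S := by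
    intro β hβ
    refine ⟨(hmf β).aestronglyMeasurable, ?_⟩
    rw [hasFiniteIntegral_iff_norm]
    have hcongr : ∫⁻ p in S, ENNReal.ofReal ‖f β p‖
        = ∫⁻ p in S, ENNReal.ofReal (f β p) := by
      refine lintegral_congr_ae ?_
      filter_upwards [ae_restrict_mem hS] with p hp
      rw [Real.norm_eq_abs, abs_of_nonneg (hnn β hβ p hp)]
    rw [hcongr, key_lintegral β hβ]
    exact ENNReal.ofReal_lt_top
  have hIval : ∀ β : ℝ, 0 < β → ∫ p in S, f β p = π ^ 5 / (15 * β ^ 4) := by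
    intro β hβ
    have h := integral_eq_lintegral_of_nonneg_ae (μ := volume.restrict S)
      (f := f β) ?_ ((hmf β).aestronglyMeasurable) 
    · rw [h, key_lintegral β hβ, ENNReal.toReal_ofReal (by positivity)]
    · filter_upwards [ae_restrict_mem hS] with p hp
      exact hnn β hβ p hp
  have hfun : (fun p : EuclideanSpace ℝ (Fin 3) =>
      p 0 * (1 / (Real.exp (βR * ‖p‖) - 1) - 1 / (Real.exp (βL * ‖p‖) - 1)))
      = fun p => f βR p - f βL p := by
    funext p
    rw [hfdef]
    simp only [one_div]
    ring
  constructor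
  · rw [hfun]
    exact (hIβ βR hR).sub (hIβ βL hL)
  · rw [hfun, integral_sub (hIβ βR hR) (hIβ βL hL), hIval βR hR, hIval βL hL]
    have hπ : (π:ℝ) ≠ 0 := Real.pi_ne_zero
    field_simp
    ring
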